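/- Let K be a field, R = K[x_1,...,x_n], m = (x_1,...,x_n), r ≥ 1 an integer, and J a nonzero homogeneous ideal of R with J ⊆ m^r. If J ∩ (m^r)^t = J·(m^r)^{t-1} for all t ≥ 1, then the least degree of a nonzero homogeneous element of J equals r. -/

import Mathlib

open MvPolynomial


lemma Finsupp.degree_add'' {σ : Type*} (a b : σ →₀ ℕ) :
    (a + b).degree = a.degree + b.degree := by
  rw [Finsupp.degree_eq_weight_one, map_add]

lemma Finsupp.degree_single'' {σ : Type*} (i : σ) (k : ℕ) :
    (Finsupp.single i k).degree = k := by
  classical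
  rw [Finsupp.degree_eq_weight_one]
  simp [Finsupp.weight, Finsupp.linearCombination, Finsupp.sum_single_index]

/-- The ideal of polynomials all of whose monomials have degree ≥ k. -/
def degGE (K : Type) [Field K] (n : ℕ) (k : ℕ) : Ideal (MvPolynomial (Fin n) K) where
  carrier := {p | ∀ μ ∈ p.support, k ≤ μ.degree}
  add_mem' := by
    intro a b ha hb μ hμ
    classical
    rcases Finset.mem_union.mp (MvPolynomial.support_add hμ) with h | h
    · exact ha μ h
    · exact hb μ h
  zero_mem' := by intro μ hμ; simp at hμ
  smul_mem' := by
    intro c p hp μ hμ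
    classical
    rw [smul_eq_mul] at hμ
    rcases Finset.mem_add.mp (MvPolynomial.support_mul c p hμ) with ⟨a, ha, b, hb, rfl⟩
    calc k ≤ b.degree := hp b hb
    _ ≤ a.degree + b.degree := Nat.le_add_left _ _
    _ = (a + b).degree := (Finsupp.degree_add'' a b).symm

lemma mem_degGE {K : Type} [Field K] {n k : ℕ} {p : MvPolynomial (Fin n) K} :
    p ∈ degGE K n k ↔ ∀ μ ∈ p.support, k ≤ μ.degree := Iff.rfl

lemma degGE_mul {K : Type} [Field K] {n : ℕ} (a b : ℕ) :
    degGE K n a * degGE K n b ≤ degGE K n (a + b) := by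
  classical
  rw [Ideal.mul_le]
  intro p hp q hq μ hμ
  rcases Finset.mem_add.mp (MvPolynomial.support_mul p q hμ) with ⟨u, hu, v, hv, rfl⟩
  rw [Finsupp.degree_add'']
  exact Nat.add_le_add (hp u hu) (hq v hv)

lemma span_X_le_degGE {K : Type} [Field K] {n : ℕ} :
    Ideal.span (Set.range (MvPolynomial.X : Fin n → MvPolynomial (Fin n) K)) ≤ degGE K n 1 := by
  rw [Ideal.span_le]
  rintro _ ⟨i, rfl⟩ μ hμ
  classical
  rw [MvPolynomial.support_X, Finset.mem_singleton] at hμ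
  subst hμ
  simp [Finsupp.degree_single'']

lemma pow_span_X_le_degGE {K : Type} [Field K] {n : ℕ} (k : ℕ) :
    (Ideal.span (Set.range (MvPolynomial.X : Fin n → MvPolynomial (Fin n) K))) ^ k
      ≤ degGE K n k := by
  induction k with
  | zero => intro p _; intro μ _; exact Nat.zero_le _
  | succ k ih =>
    calc (Ideal.span (Set.range (MvPolynomial.X : Fin n → MvPolynomial (Fin n) K))) ^ (k+1)
        = (Ideal.span (Set.range MvPolynomial.X)) ^ k * Ideal.span (Set.range MvPolynomial.X) := by
          rw [pow_succ]
      _ ≤ degGE K n k * degGE K n 1 := Ideal.mul_mono ih span_X_le_degGE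
      _ ≤ degGE K n (k + 1) := degGE_mul k 1

lemma monomial_mem_pow_span_X {K : Type} [Field K] {n : ℕ} (μ : Fin n →₀ ℕ) (c : K) :
    MvPolynomial.monomial μ c ∈
      (Ideal.span (Set.range (MvPolynomial.X : Fin n → MvPolynomial (Fin n) K))) ^ μ.degree := by
  classical
  induction μ using Finsupp.induction with
  | zero => simp
  | single_add i k ν hi hk ih =>
    have hXi : (MvPolynomial.X i : MvPolynomial (Fin n) K) ∈
        Ideal.span (Set.range (MvPolynomial.X : Fin n → MvPolynomial (Fin n) K)) :=
      Ideal.subset_span ⟨i, rfl⟩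
    have h1 : (MvPolynomial.X i : MvPolynomial (Fin n) K) ^ k ∈
        (Ideal.span (Set.range (MvPolynomial.X : Fin n → MvPolynomial (Fin n) K))) ^ k :=
      Ideal.pow_mem_pow hXi k
    have h2 := Ideal.mul_mem_mul h1 ih
    rw [← pow_add] at h2
    have hdeg : (Finsupp.single i k + ν).degree = k + ν.degree := by
      rw [Finsupp.degree_add'', Finsupp.degree_single'']
    rw [hdeg]
    have : (MvPolynomial.monomial (Finsupp.single i k + ν) c : MvPolynomial (Fin n) K)
        = MvPolynomial.X i ^ k * MvPolynomial.monomial ν c := by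
      rw [MvPolynomial.X_pow_eq_monomial, MvPolynomial.monomial_mul, one_mul]
    rw [this]
    exact h2

lemma homogeneous_mem_pow_span_X {K : Type} [Field K] {n : ℕ} {f : MvPolynomial (Fin n) K}
    {d : ℕ} (hf : f.IsHomogeneous d) :
    f ∈ (Ideal.span (Set.range (MvPolynomial.X : Fin n → MvPolynomial (Fin n) K))) ^ d := by
  classical
  rw [← f.support_sum_monomial_coeff]
  refine Ideal.sum_mem _ (fun μ hμ => ?_)
  have hdeg : μ.degree = d := by
    have := hf (MvPolynomial.mem_support_iff.mp hμ)
    rw [Finsupp.degree_eq_weight_one]; exact this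
  rw [← hdeg]
  exact monomial_mem_pow_span_X μ _

/-- Let `J ⊆ m^r` be a nonzero homogeneous ideal of `K[x_1,…,x_n]`
(`m = (x_1,…,x_n)`, `r ≥ 1`).  If `J ∩ (m^r)^t = J·(m^r)^{t-1}` for all `t ≥ 1`
(vanishing of the Valabrega–Valla module `VV_{J ⊆ m^r}`), then the least degree of a
nonzero homogeneous element of `J` equals `r`. -/
theorem indeg_eq_r_of_VV_vanishes {K : Type} [Field K] {n : ℕ} (r : ℕ) (hr : 1 ≤ r)
    (J : Ideal (MvPolynomial (Fin n) K))
    (hhom : ∀ f ∈ J, ∀ d : ℕ, MvPolynomial.homogeneousComponent d f ∈ J)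
    (hJne : J ≠ ⊥)
    (m : Ideal (MvPolynomial (Fin n) K))
    (hm : m = Ideal.span (Set.range MvPolynomial.X))
    (hJm : J ≤ m ^ r)
    (hVV : ∀ t : ℕ, 1 ≤ t → J ⊓ (m ^ r) ^ t = J * (m ^ r) ^ (t - 1)) :
    sInf {d : ℕ | ∃ f ∈ J, f ≠ 0 ∧ MvPolynomial.IsHomogeneous f d} = r := by
  classical
  subst hm
  set S : Set ℕ := {d : ℕ | ∃ f ∈ J, f ≠ 0 ∧ MvPolynomial.IsHomogeneous f d} with hS
  -- S is nonempty
  obtain ⟨p, hpJ, hp0⟩ : ∃ p ∈ J, p ≠ 0 := by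
    by_contra h
    push_neg at h
    exact hJne (le_antisymm (fun x hx => (Ideal.mem_bot).mpr (by
      by_contra hx0; exact hx0 (h x hx))) bot_le)
  have hSne : S.Nonempty := by
    by_contra hno
    apply hp0
    rw [← MvPolynomial.sum_homogeneousComponent p]
    refine Finset.sum_eq_zero (fun i _ => ?_)
    by_contra hne
    exact hno ⟨i, MvPolynomial.homogeneousComponent i p, hhom p hpJ i, hne,
      MvPolynomial.homogeneousComponent_isHomogeneous i p⟩
  set d := sInf S with hd
  obtain ⟨f, hfJ, hf0, hfhom⟩ := Nat.sInf_mem hSne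
  -- every element of J lies in degGE d
  have hJdeg : J ≤ degGE K n d := by
    intro q hq μ hμ
    have hc : MvPolynomial.coeff μ q ≠ 0 := MvPolynomial.mem_support_iff.mp hμ
    have hcomp : MvPolynomial.homogeneousComponent μ.degree q ≠ 0 := by
      intro h
      have := MvPolynomial.coeff_homogeneousComponent (φ := q) μ.degree μ
      rw [h, if_pos rfl] at this
      exact hc (by simpa using this.symm)
    exact Nat.sInf_le ⟨_, hhom q hq μ.degree, hcomp,
      MvPolynomial.homogeneousComponent_isHomogeneous μ.degree q⟩
  -- obtain a monomial of f; its degree is d, and since f ∈ m^r ≤ degGE r, we get r ≤ d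
  obtain ⟨μ, hμ⟩ := (MvPolynomial.support_nonempty).mpr hf0
  have hμd : μ.degree = d := by
    have := hfhom (MvPolynomial.mem_support_iff.mp hμ)
    rw [Finsupp.degree_eq_weight_one]; exact this
  have hrd : r ≤ d := by
    have := pow_span_X_le_degGE (K := K) (n := n) r (hJm hfJ) μ hμ
    omega
  -- now show d ≤ r.  Handle n = 0 separately (then J = ⊥, contradiction)
  have hd1 : 1 ≤ d := le_trans hr hrd
  rcases Nat.eq_zero_or_pos n with hn | hn
  · exfalso
    subst hn
    apply hJne
    have hmbot : Ideal.span (Set.range (MvPolynomial.X : Fin 0 → MvPolynomial (Fin 0) K)) = ⊥ := by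
      have : (Set.range (MvPolynomial.X : Fin 0 → MvPolynomial (Fin 0) K)) = ∅ := by
        rw [Set.range_eq_empty_iff]; exact ⟨fun i => i.elim0⟩
      rw [this, Ideal.span_empty]
    have : J ≤ ⊥ := by
      refine le_trans hJm ?_
      rw [hmbot]
      calc (⊥ : Ideal (MvPolynomial (Fin 0) K)) ^ r ≤ ⊥ ^ 1 :=
        Ideal.pow_le_pow_right hr
      _ = ⊥ := pow_one ⊥
    exact le_antisymm this bot_le
  -- the variable X 0 exists
  set i0 : Fin n := ⟨0, hn⟩ with hi0
  set e := r * d - d with he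
  set g := MvPolynomial.X (R := K) i0 ^ e * f with hg
  have hg0 : g ≠ 0 := mul_ne_zero (pow_ne_zero e (MvPolynomial.X_ne_zero i0)) hf0
  have hghom : g.IsHomogeneous (e + d) :=
    (MvPolynomial.isHomogeneous_X_pow (R := K) i0 e).mul hfhom
  have hgJ : g ∈ J := Ideal.mul_mem_left J _ hfJ
  have hgmem : g ∈ (Ideal.span (Set.range (MvPolynomial.X : Fin n → MvPolynomial (Fin n) K)) ^ r) ^ d := by
    have hed : e + d = r * d := by
      have : d ≤ r * d := Nat.le_mul_of_pos_left d hr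
      omega
    rw [← pow_mul]
    rw [← hed]
    exact homogeneous_mem_pow_span_X hghom
  have hgin : g ∈ J * (Ideal.span (Set.range (MvPolynomial.X : Fin n → MvPolynomial (Fin n) K)) ^ r) ^ (d - 1) := by
    rw [← hVV d hd1]
    exact ⟨hgJ, hgmem⟩
  -- degree bound from the product
  have hbound : g ∈ degGE K n (d + r * (d - 1)) := by
    refine le_trans (Ideal.mul_mono hJdeg ?_) (degGE_mul d (r * (d-1))) hgin
    rw [← pow_mul]
    exact pow_span_X_le_degGE (r * (d - 1))
  obtain ⟨ν, hν⟩ := (MvPolynomial.support_nonempty).mpr hg0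
  have hνd : ν.degree = e + d := by
    have := hghom (MvPolynomial.mem_support_iff.mp hν)
    rw [Finsupp.degree_eq_weight_one]; exact this
  have := hbound ν hν
  rw [hνd] at this
  -- e + d = r * d  ≥ d + r*(d-1) = d + r*d - r  ⟹  r ≥ d
  have hrd' : d ≤ r := by
    have h1 : e = r * d - d := he
    have h2 : d ≤ r * d := Nat.le_mul_of_pos_left d hr
    have h3 : r * (d - 1) = r * d - r := by
      cases d with
      | zero => omega
      | succ k => rw [Nat.succ_sub_one, Nat.mul_succ]; omega
    omega
  omega
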